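/- Let φ and ψ be Young functions with lim_{x→∞} φ(x)/x = ∞, ψ̃(x) = ψ(x)/x strictly increasing with ψ̃(0) = 0, ψ̃(∞) = ∞, and suppose η = φ^{-1} ∘ ψ̃ is equivalent to a Young function. Then there exists a constant C and x₀ > 0 such that φ^{-1}(x) ≤ C ζ^{-1}(x) ψ̃^{-1}(x) for all x ≥ x₀, where ζ(x) = sup_{y≥0}(φ(xy) − ψ(y)/y) and ζ^{-1} denotes its generalized inverse. -/

import Mathlib

open Filter Topology MeasureTheory
open scoped ENNReal
noncomputable section

/-- A Young function: strictly increasing, convex on `[0,∞)`, vanishing at `0`. -/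
def IsYoung (f : ℝ → ℝ) : Prop :=
  StrictMonoOn f (Set.Ici 0) ∧ ConvexOn ℝ (Set.Ici 0) f ∧ f 0 = 0

/-- Legendre transform of a real function (sup over `y ≥ 0`), `ℝ≥0∞`-valued. -/
def Leg (f : ℝ → ℝ) (x : ℝ) : ℝ≥0∞ :=
  ⨆ y : {y : ℝ // 0 ≤ y}, ENNReal.ofReal (x * y - f y)

/-- Legendre transform of an `ℝ≥0∞`-valued function. -/
def LegE (f : ℝ → ℝ≥0∞) (x : ℝ) : ℝ≥0∞ :=
  ⨆ y : {y : ℝ // 0 ≤ y}, (ENNReal.ofReal (x * y) - f y)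

/-- Monotone extension of a real function on `[0,∞)` to `ℝ≥0∞` arguments. -/
def extE (f : ℝ → ℝ) (t : ℝ≥0∞) : ℝ≥0∞ :=
  ⨆ s : {s : ℝ // 0 ≤ s ∧ ENNReal.ofReal s ≤ t}, ENNReal.ofReal (f s)

/-- Monotone extension of an `ℝ≥0∞`-valued function to `ℝ≥0∞` arguments. -/
def extLT (f : ℝ → ℝ≥0∞) (t : ℝ≥0∞) : ℝ≥0∞ :=
  ⨆ s : {s : ℝ // 0 ≤ s ∧ ENNReal.ofReal s ≤ t}, f s

/-- Generalized (right-continuous) inverse of an `ℝ≥0∞`-valued function. -/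
def invE (g : ℝ → ℝ≥0∞) (t : ℝ≥0∞) : ℝ≥0∞ :=
  ⨅ s : {s : ℝ // 0 ≤ s ∧ t ≤ g s}, ENNReal.ofReal s

/-- `ρ(x) = sup_{y ≥ 0} (φ(xy) - ψ(y))/y`. -/
def rhoSup (φ ψ : ℝ → ℝ) (x : ℝ) : ℝ≥0∞ :=
  ⨆ y : {y : ℝ // 0 ≤ y}, ENNReal.ofReal ((φ (x * y) - ψ y) / y)

/-- `ζ(x) = sup_{y ≥ 0} (φ(xy) - ψ(y)/y)`. -/
def zetaSup (φ ψ : ℝ → ℝ) (x : ℝ) : ℝ≥0∞ :=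
  ⨆ y : {y : ℝ // 0 ≤ y}, ENNReal.ofReal (φ (x * y) - ψ y / y)

/-- Domination order on real functions: `f(x) ≤ C₁ g(C₂ x)` for large `x`. -/
def DominR (f g : ℝ → ℝ) : Prop :=
  ∃ C₁ C₂ x₀ : ℝ, 0 < C₁ ∧ 0 < C₂ ∧ 0 < x₀ ∧ ∀ x ≥ x₀, f x ≤ C₁ * g (C₂ * x)

/-- Equivalence of real functions: mutual domination. -/
def EquivR (f g : ℝ → ℝ) : Prop := DominR f g ∧ DominR g f

/-- Domination order on `ℝ≥0∞`-valued functions. -/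
def DominE (f g : ℝ → ℝ≥0∞) : Prop :=
  ∃ C₁ C₂ x₀ : ℝ, 0 < C₁ ∧ 0 < C₂ ∧ 0 < x₀ ∧
    ∀ x ≥ x₀, f x ≤ ENNReal.ofReal C₁ * g (C₂ * x)

/-- Equivalence of `ℝ≥0∞`-valued functions: mutual domination. -/
def EquivE (f g : ℝ → ℝ≥0∞) : Prop := DominE f g ∧ DominE g f

/-- If η = φ⁻¹ ∘ ψ̃ is equivalent to a Young function then
φ⁻¹(x) ≤ C ζ⁻¹(x) ψ̃⁻¹(x) for large x, where ζ(x) = sup_y (φ(xy) − ψ(y)/y). -/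
lemma slope_aux (Y : ℝ → ℝ) (hY : ConvexOn ℝ (Set.Ici 0) Y) (hY0 : Y 0 = 0)
    {s t : ℝ} (hs : 0 < s) (hst : s ≤ t) : Y s * t ≤ Y t * s := by
  have ht : 0 < t := hs.trans_le hst
  have hb0 : 0 ≤ s / t := by positivity
  have hb1 : s / t ≤ 1 := (div_le_one ht).2 hst
  have h1 := hY.2 (Set.mem_Ici.2 (le_refl (0:ℝ))) (Set.mem_Ici.2 ht.le)
      (by linarith : (0:ℝ) ≤ 1 - s/t) hb0 (by ring)
  have h2 : (1 - s/t) • (0:ℝ) + (s/t) • t = s := by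
    simp only [smul_eq_mul, mul_zero, zero_add]
    field_simp
  rw [h2] at h1
  simp only [smul_eq_mul, hY0, mul_zero, zero_add] at h1
  have h3 := mul_le_mul_of_nonneg_right h1 ht.le
  have h4 : s / t * Y t * t = Y t * s := by field_simp
  linarith

set_option maxHeartbeats 1000000 in
theorem stmt17 (φ ψ φinv tψinv : ℝ → ℝ) (hφ : IsYoung φ) (hψ : IsYoung ψ)
    (hsup : Tendsto (fun x => φ x / x) atTop atTop)
    (htψ : StrictMonoOn (fun x => ψ x / x) (Set.Ici 0))
    (htψ0 : ψ 0 / 0 = 0)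
    (htψi : Tendsto (fun x => ψ x / x) atTop atTop)
    (hφinv : ∀ x ≥ (0:ℝ), 0 ≤ φinv x ∧ φ (φinv x) = x)
    (htinv : ∀ x ≥ (0:ℝ), 0 ≤ tψinv x ∧ ψ (tψinv x) / tψinv x = x)
    (hη : ∃ Y, IsYoung Y ∧ EquivR (fun x => φinv (ψ x / x)) Y) :
    ∃ C x₀ : ℝ, 0 < C ∧ 0 < x₀ ∧ ∀ x ≥ x₀,
      ENNReal.ofReal (φinv x) ≤
        ENNReal.ofReal C *
          (invE (zetaSup φ ψ) (ENNReal.ofReal x) * ENNReal.ofReal (tψinv x)) := by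
  obtain ⟨Yf, hYf, ⟨D₁, D₂, t₂, hD₁, hD₂, ht₂, hdom1⟩, ⟨C₁, C₂, t₁, hC₁, hC₂, ht₁, hdom2⟩⟩ := hη
  have hφmono : MonotoneOn φ (Set.Ici 0) := hφ.1.monotoneOn
  set C : ℝ := max (C₁ * C₂ * (D₁ * D₂)) (2 * (C₂ * D₂)) with hCdef
  have hCpos : 0 < C := lt_max_of_lt_right (by positivity)
  have hCb1 : C₁ * C₂ * (D₁ * D₂) ≤ C := le_max_left _ _
  have hCb2 : 2 * (C₂ * D₂) ≤ C := le_max_right _ _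
  set M : ℝ := max (max (t₁ / D₂) t₂) 1 with hMdef
  have hM1 : (1:ℝ) ≤ M := le_max_right _ _
  have hMpos : (0:ℝ) < M := lt_of_lt_of_le one_pos hM1
  refine ⟨C, max (ψ M / M + 1) 1, hCpos, lt_of_lt_of_le one_pos (le_max_right _ _),
    fun x hx => ?_⟩
  have hx1 : (1:ℝ) ≤ x := le_trans (le_max_right _ _) hx
  have hxpos : (0:ℝ) < x := lt_of_lt_of_le one_pos hx1
  obtain ⟨hw0, hwψ⟩ := htinv x hxpos.le
  set w : ℝ := tψinv x with hwdef
  -- ψ̃ nonneg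
  have hψt0 : ∀ y : ℝ, 0 ≤ y → 0 ≤ ψ y / y := by
    intro y hy
    rcases eq_or_lt_of_le hy with h | h
    · rw [← h, htψ0]
    · have h2 := htψ (Set.mem_Ici.2 (le_refl (0:ℝ))) (Set.mem_Ici.2 hy) h
      simp only at h2
      rw [htψ0] at h2
      exact h2.le
  -- w > M
  have hwM : M < w := by
    by_contra h
    push_neg at h
    have h2 := htψ.monotoneOn (Set.mem_Ici.2 hw0) (Set.mem_Ici.2 hMpos.le) h
    rw [hwψ] at h2
    have h3 : ψ M / M + 1 ≤ x := le_trans (le_max_left _ _) hx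
    linarith
  have hwpos : (0:ℝ) < w := lt_of_lt_of_le hMpos hwM.le
  obtain ⟨hφx0, hφxeq⟩ := hφinv x hxpos.le
  have hφxpos : 0 < φinv x := by
    rcases eq_or_lt_of_le hφx0 with h | h
    · rw [← h] at hφxeq; rw [hφ.2.2] at hφxeq; linarith
    · exact h
  obtain ⟨hh0, hheq⟩ := hφinv (x/2) (by linarith)
  -- φinv x / 2 ≤ φinv (x/2)
  have hhalf : φinv x / 2 ≤ φinv (x/2) := by
    have hs := slope_aux φ hφ.2.1 hφ.2.2 (by linarith : (0:ℝ) < φinv x / 2)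
      (by linarith : φinv x / 2 ≤ φinv x)
    rw [hφxeq] at hs
    have h5 : φ (φinv x / 2) ≤ x / 2 := by nlinarith
    by_contra h
    push_neg at h
    have h6 := hφ.1 (Set.mem_Ici.2 hh0) (Set.mem_Ici.2 (by linarith : (0:ℝ) ≤ φinv x / 2)) h
    rw [hheq] at h6
    linarith
  set a : ℝ := φinv x / (C * w) with hadef
  have ha0 : 0 ≤ a := by positivity
  -- key pointwise bound
  have key : ∀ y : ℝ, 0 ≤ y → φ (a * y) - ψ y / y ≤ x / 2 := by
    intro y hy
    rcases le_total y (C₂ * D₂ * w) with hcase | hcase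
    · have h1 : a * y ≤ a * (C₂ * D₂ * w) := mul_le_mul_of_nonneg_left hcase ha0
      have h2 : a * (C₂ * D₂ * w) = φinv x * (C₂ * D₂) / C := by
        rw [hadef]; field_simp
      have h3 : φinv x * (C₂ * D₂) / C ≤ φinv x / 2 := by
        rw [div_le_div_iff₀ hCpos two_pos]
        nlinarith
      have hay : a * y ≤ φinv (x/2) := by linarith
      have h4 : φ (a * y) ≤ x / 2 := by
        have h5 := hφmono (Set.mem_Ici.2 (mul_nonneg ha0 hy)) (Set.mem_Ici.2 hh0) hay
        rwa [hheq] at h5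
      have := hψt0 y hy
      linarith
    · have hypos : 0 < y := lt_of_lt_of_le (by positivity) hcase
      obtain ⟨hηy0, hηyeq⟩ := hφinv (ψ y / y) (hψt0 y hy)
      have hu : (0:ℝ) < D₂ * w := by positivity
      have hv : (0:ℝ) < y / C₂ := by positivity
      have huv : D₂ * w ≤ y / C₂ := by
        rw [le_div_iff₀ hC₂]
        have he : D₂ * w * C₂ = C₂ * D₂ * w := by ring
        linarith
      -- s1 : φinv x ≤ D₁ * Yf (D₂ * w)
      have s1 : φinv x ≤ D₁ * Yf (D₂ * w) := by
        have ht₂M : t₂ ≤ M := le_trans (le_max_right _ _) (le_max_left _ _)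
        have h := hdom1 w (le_trans ht₂M hwM.le)
        simp only at h
        rwa [hwψ] at h
      have s2 : Yf (D₂ * w) * (y / C₂) ≤ Yf (y / C₂) * (D₂ * w) :=
        slope_aux Yf hYf.2.1 hYf.2.2 hu huv
      have s3 : Yf (y / C₂) ≤ C₁ * φinv (ψ y / y) := by
        have ht₁y : t₁ ≤ y / C₂ := by
          have h2 : t₁ / D₂ ≤ M := le_trans (le_max_left _ _) (le_max_left _ _)
          rw [div_le_iff₀ hD₂] at h2
          have h3 : M * D₂ ≤ w * D₂ := mul_le_mul_of_nonneg_right hwM.le hD₂.le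
          have h4 : w * D₂ = D₂ * w := by ring
          linarith
        have h := hdom2 (y / C₂) ht₁y
        simp only at h
        have hcy : C₂ * (y / C₂) = y := by field_simp
        rwa [hcy] at h
      have goal1 : a * y ≤ φinv (ψ y / y) := by
        rw [hadef, div_mul_eq_mul_div, div_le_iff₀ (by positivity : (0:ℝ) < C * w)]
        have e1 : D₁ * Yf (D₂ * w) * y = D₁ * C₂ * (Yf (D₂ * w) * (y / C₂)) := by
          field_simp
        calc φinv x * y ≤ D₁ * Yf (D₂ * w) * y :=
              mul_le_mul_of_nonneg_right s1 hypos.le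
          _ = D₁ * C₂ * (Yf (D₂ * w) * (y / C₂)) := e1
          _ ≤ D₁ * C₂ * (Yf (y / C₂) * (D₂ * w)) :=
              mul_le_mul_of_nonneg_left s2 (by positivity)
          _ = (D₁ * C₂ * D₂) * Yf (y / C₂) * w := by ring
          _ ≤ (D₁ * C₂ * D₂) * (C₁ * φinv (ψ y / y)) * w := by
              apply mul_le_mul_of_nonneg_right _ hwpos.le
              exact mul_le_mul_of_nonneg_left s3 (by positivity)
          _ = (C₁ * C₂ * (D₁ * D₂)) * (φinv (ψ y / y) * w) := by ring
          _ ≤ C * (φinv (ψ y / y) * w) :=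
              mul_le_mul_of_nonneg_right hCb1 (mul_nonneg hηy0 hwpos.le)
          _ = φinv (ψ y / y) * (C * w) := by ring
      have h4 : φ (a * y) ≤ ψ y / y := by
        have h5 := hφmono (Set.mem_Ici.2 (mul_nonneg ha0 hypos.le))
          (Set.mem_Ici.2 hηy0) goal1
        rwa [hηyeq] at h5
      linarith
  -- zeta bound for s ≤ a
  have keyS : ∀ s : ℝ, 0 ≤ s → s ≤ a → zetaSup φ ψ s ≤ ENNReal.ofReal (x/2) := by
    intro s hs0 hsa
    refine iSup_le ?_
    rintro ⟨y, hy⟩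
    apply ENNReal.ofReal_le_ofReal
    have h1 : φ (s * y) ≤ φ (a * y) :=
      hφmono (Set.mem_Ici.2 (mul_nonneg hs0 hy)) (Set.mem_Ici.2 (mul_nonneg ha0 hy))
        (mul_le_mul_of_nonneg_right hsa hy)
    have h2 := key y hy
    simp only
    linarith
  -- invE lower bound
  have hinv : ENNReal.ofReal a ≤ invE (zetaSup φ ψ) (ENNReal.ofReal x) := by
    refine le_iInf ?_
    rintro ⟨s, hs0, hsge⟩
    apply ENNReal.ofReal_le_ofReal
    by_contra h
    push_neg at h
    have h2 := keyS s hs0 h.le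
    have h3 : ENNReal.ofReal x ≤ ENNReal.ofReal (x/2) := le_trans hsge h2
    have h4 : ENNReal.ofReal (x/2) < ENNReal.ofReal x :=
      (ENNReal.ofReal_lt_ofReal_iff hxpos).2 (by linarith)
    exact absurd h3 (not_le.2 h4)
  -- conclude
  have hfin : C * (a * w) = φinv x := by
    rw [hadef]; field_simp
  calc ENNReal.ofReal (φinv x) = ENNReal.ofReal (C * (a * w)) := by rw [hfin]
    _ = ENNReal.ofReal C * (ENNReal.ofReal a * ENNReal.ofReal w) := by
        rw [ENNReal.ofReal_mul hCpos.le, ENNReal.ofReal_mul ha0]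
    _ ≤ ENNReal.ofReal C *
          (invE (zetaSup φ ψ) (ENNReal.ofReal x) * ENNReal.ofReal w) := by
        gcongr
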